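/- Let N ≥ 2 and let 𝒦 = {K₁, …, K_M} be a finite set of row-stochastic N×N real matrices, each with strictly positive diagonal entries, and let p₁, …, p_M be strictly positive reals summing to 1. If Σᵢ pᵢKᵢ is primitive, then for every pair (i,j) ∈ {1,…,N}² there exist an integer L with 1 ≤ L ≤ N−1 and indices k₁, …, k_L ∈ {1,…,M} such that the (i,j) entry of the product K_{k₁}K_{k₂}⋯K_{k_L} is strictly positive. -/

import Mathlib

open Matrix Kronecker Finset

/-- A square real matrix is row-stochastic if it has nonnegative entries and
each of its rows sums to 1. -/
def RowStochastic {N : ℕ} (K : Matrix (Fin N) (Fin N) ℝ) : Prop :=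
  (∀ i j, 0 ≤ K i j) ∧ ∀ i, ∑ j, K i j = 1

/-- A nonnegative square matrix `T` is primitive if `T ^ m` has all entries
strictly positive for some integer `m ≥ 1`. -/
def IsPrimitive {n : Type*} [Fintype n] [DecidableEq n] (T : Matrix n n ℝ) : Prop :=
  ∃ m : ℕ, 1 ≤ m ∧ ∀ i j, 0 < (T ^ m) i j

/-- Entry of product of nonneg matrices positive if a witness exists. -/
lemma aux_mul_entry_pos {N : ℕ} {A B : Matrix (Fin N) (Fin N) ℝ}
    (hA : ∀ i j, 0 ≤ A i j) (hB : ∀ i j, 0 ≤ B i j) {i x j : Fin N}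
    (h1 : 0 < A i x) (h2 : 0 < B x j) : 0 < (A * B) i j := by
  rw [Matrix.mul_apply]
  exact Finset.sum_pos' (fun y _ => mul_nonneg (hA i y) (hB y j))
    ⟨x, Finset.mem_univ x, mul_pos h1 h2⟩

/-- From a positive entry of a product extract an intermediate index. -/
lemma aux_exists_of_mul_pos {N : ℕ} {A B : Matrix (Fin N) (Fin N) ℝ}
    (hA : ∀ i j, 0 ≤ A i j) (hB : ∀ i j, 0 ≤ B i j) {i j : Fin N}
    (h : 0 < (A * B) i j) : ∃ x, 0 < A i x ∧ 0 < B x j := by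
  by_contra hc
  push_neg at hc
  have hz : (A * B) i j = 0 := by
    rw [Matrix.mul_apply]
    refine Finset.sum_eq_zero fun x _ => ?_
    rcases (hA i x).eq_or_lt with h0 | h0
    · rw [← h0, zero_mul]
    · have := hc x h0
      have := hB x j
      have : B x j = 0 := le_antisymm ‹B x j ≤ 0› ‹0 ≤ B x j›
      rw [this, mul_zero]
  rw [hz] at h
  exact lt_irrefl _ h

lemma aux_pow_nonneg {N : ℕ} {A : Matrix (Fin N) (Fin N) ℝ}
    (hA : ∀ i j, 0 ≤ A i j) : ∀ (L : ℕ) (i j : Fin N), 0 ≤ (A ^ L) i j := by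
  intro L
  induction L with
  | zero => intro i j; simp [Matrix.one_apply]; split <;> norm_num
  | succ L ih =>
      intro i j
      rw [pow_succ, Matrix.mul_apply]
      exact Finset.sum_nonneg fun x _ => mul_nonneg (ih i x) (hA x j)

lemma aux_pow_mono {N : ℕ} {A B : Matrix (Fin N) (Fin N) ℝ}
    (hA : ∀ i j, 0 ≤ A i j) (hB : ∀ i j, 0 ≤ B i j)
    (hAB : ∀ i j, A i j ≤ B i j) :
    ∀ (L : ℕ) (i j : Fin N), (A ^ L) i j ≤ (B ^ L) i j := by
  intro L
  induction L with
  | zero => intro i j; simp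
  | succ L ih =>
      intro i j
      rw [pow_succ, pow_succ, Matrix.mul_apply, Matrix.mul_apply]
      refine Finset.sum_le_sum fun x _ => ?_
      exact mul_le_mul (ih i x) (hAB x j) (hA x j) (aux_pow_nonneg hB L i x)

lemma aux_listProd_nonneg {N : ℕ} :
    ∀ (l : List (Matrix (Fin N) (Fin N) ℝ)),
      (∀ A ∈ l, ∀ i j, 0 ≤ A i j) → ∀ i j, 0 ≤ l.prod i j := by
  intro l
  induction l with
  | nil => intro _ i j; simp [Matrix.one_apply]; split <;> norm_num
  | cons A t ih =>
      intro h i j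
      rw [List.prod_cons, Matrix.mul_apply]
      refine Finset.sum_nonneg fun x _ => mul_nonneg (h A (by simp) i x) ?_
      exact ih (fun B hB => h B (by simp [hB])) x j

/-- Translate positivity of a power of the matrix sum into a word. -/
lemma aux_translate {N M : ℕ} (K : Fin M → Matrix (Fin N) (Fin N) ℝ)
    (hK0 : ∀ k i j, 0 ≤ K k i j) :
    ∀ (L : ℕ) (i j : Fin N), 0 < ((∑ k, K k) ^ L) i j →
      ∃ f : Fin L → Fin M, 0 < ((List.ofFn fun s => K (f s)).prod) i j := by
  have hS0 : ∀ a b, 0 ≤ (∑ k, K k) a b := by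
    intro a b
    rw [Matrix.sum_apply]
    exact Finset.sum_nonneg fun k _ => hK0 k a b
  intro L
  induction L with
  | zero =>
      intro i j h
      refine ⟨Fin.elim0, ?_⟩
      simpa using h
  | succ L ih =>
      intro i j h
      rw [pow_succ'] at h
      obtain ⟨x, hx1, hx2⟩ := aux_exists_of_mul_pos hS0 (aux_pow_nonneg hS0 L) h
      have hk : ∃ k, 0 < K k i x := by
        by_contra hc
        push_neg at hc
        have hz : (∑ k, K k) i x = 0 := by
          rw [Matrix.sum_apply]
          exact Finset.sum_eq_zero fun k _ => le_antisymm (hc k) (hK0 k i x)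
        rw [hz] at hx1; exact lt_irrefl _ hx1
      obtain ⟨k, hk⟩ := hk
      obtain ⟨f, hf⟩ := ih x j hx2
      refine ⟨Fin.cons k f, ?_⟩
      have heq : (List.ofFn fun s : Fin (L + 1) => K ((Fin.cons k f : Fin (L+1) → Fin M) s)) =
          K k :: List.ofFn (fun s => K (f s)) := by
        rw [List.ofFn_succ]
        simp
      rw [heq, List.prod_cons]
      refine aux_mul_entry_pos (hK0 k) ?_ hk hf
      exact aux_listProd_nonneg _ (by
        intro A hA i' j'
        obtain ⟨s, rfl⟩ := List.mem_ofFn.1 hA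
        exact hK0 _ i' j')

theorem stmt2 {N M : ℕ} (hN : 2 ≤ N) (hM : 1 ≤ M)
    (K : Fin M → Matrix (Fin N) (Fin N) ℝ)
    (hK : ∀ k, RowStochastic (K k))
    (hdiag : ∀ k i, 0 < K k i i)
    (p : Fin M → ℝ) (hp : ∀ k, 0 < p k) (hpsum : ∑ k, p k = 1)
    (hprim : _root_.IsPrimitive (∑ k, p k • K k)) :
    ∀ i j : Fin N, ∃ L : ℕ, 1 ≤ L ∧ L ≤ N - 1 ∧
      ∃ f : Fin L → Fin M, 0 < ((List.ofFn fun s => K (f s)).prod) i j := by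
  classical
  have hK0 : ∀ k i j, 0 ≤ K k i j := fun k => (hK k).1
  set S : Matrix (Fin N) (Fin N) ℝ := ∑ k, K k with hSdef
  have hS0 : ∀ a b, 0 ≤ S a b := by
    intro a b
    rw [hSdef, Matrix.sum_apply]
    exact Finset.sum_nonneg fun k _ => hK0 k a b
  have hSdiag : ∀ a, 0 < S a a := by
    intro a
    rw [hSdef, Matrix.sum_apply]
    have : Nonempty (Fin M) := ⟨⟨0, hM⟩⟩
    exact Finset.sum_pos (fun k _ => hdiag k a) Finset.univ_nonempty
  have hA0 : ∀ a b, 0 ≤ (∑ k, p k • K k) a b := by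
    intro a b
    rw [Matrix.sum_apply]
    refine Finset.sum_nonneg fun k _ => ?_
    simp only [Matrix.smul_apply, smul_eq_mul]
    exact mul_nonneg (hp k).le (hK0 k a b)
  have hABle : ∀ a b, (∑ k, p k • K k) a b ≤ S a b := by
    intro a b
    rw [hSdef, Matrix.sum_apply, Matrix.sum_apply]
    refine Finset.sum_le_sum fun k _ => ?_
    simp only [Matrix.smul_apply, smul_eq_mul]
    have hpk1 : p k ≤ 1 := by
      rw [← hpsum]
      exact Finset.single_le_sum (fun k _ => (hp k).le) (Finset.mem_univ k)
    exact mul_le_of_le_one_left (hK0 k a b) hpk1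
  obtain ⟨m, hm1, hmpos⟩ := hprim
  have hSm : ∀ a b, 0 < (S ^ m) a b := fun a b =>
    (hmpos a b).trans_le (aux_pow_mono hA0 hS0 hABle m a b)
  intro i j
  set g : ℕ → Finset (Fin N) :=
    fun d => Finset.univ.filter fun b => 0 < (S ^ d) i b with hgdef
  have hg : ∀ d b, b ∈ g d ↔ 0 < (S ^ d) i b := by
    intro d b; simp [hgdef]
  have hmono1 : ∀ d, g d ⊆ g (d + 1) := by
    intro d b hb
    rw [hg] at hb ⊢
    rw [pow_succ]
    exact aux_mul_entry_pos (aux_pow_nonneg hS0 d) hS0 hb (hSdiag b)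
  have hmono : ∀ d e, d ≤ e → g d ⊆ g e := by
    intro d e h
    induction e, h using Nat.le_induction with
    | base => exact subset_rfl
    | succ e he ih => exact ih.trans (hmono1 e)
  have hstep : ∀ d b, b ∈ g (d + 1) → ∃ x ∈ g d, 0 < S x b := by
    intro d b hb
    rw [hg, pow_succ] at hb
    obtain ⟨x, hx1, hx2⟩ := aux_exists_of_mul_pos (aux_pow_nonneg hS0 d) hS0 hb
    exact ⟨x, (hg d x).2 hx1, hx2⟩
  have hstab : ∀ d, g d = g (d + 1) → ∀ t, g (d + t) = g d := by
    intro d hd t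
    induction t with
    | zero => rfl
    | succ t ih =>
        apply Finset.Subset.antisymm
        · intro b hb
          have hb' : b ∈ g (d + t + 1) := by rwa [← Nat.add_assoc] at hb
          obtain ⟨x, hx, hxb⟩ := hstep (d + t) b hb'
          rw [ih] at hx
          have hb1 : b ∈ g (d + 1) := by
            rw [hg, pow_succ]
            exact aux_mul_entry_pos (aux_pow_nonneg hS0 d) hS0 ((hg d x).1 hx) hxb
          rw [hd]; exact hb1
        · exact hmono d (d + t + 1) (by omega)
  have hexists_d : ∃ d ≤ N - 1, g d = g (d + 1) := by
    by_contra hc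
    push_neg at hc
    have hcard : ∀ d, d ≤ N → d + 1 ≤ (g d).card := by
      intro d
      induction d with
      | zero =>
          intro _
          have hi : i ∈ g 0 := by
            rw [hg]
            simp [Matrix.one_apply]
          simpa using Finset.card_pos.2 ⟨i, hi⟩
      | succ d ih =>
          intro hdN
          have h1 : d ≤ N - 1 := by omega
          have hss : g d ⊂ g (d + 1) := (hmono1 d).ssubset_of_ne (hc d h1)
          have h2 := Finset.card_lt_card hss
          have h3 := ih (by omega)
          omega
    have h4 := hcard N le_rfl
    have h5 : (g N).card ≤ N := (Finset.card_le_univ _).trans (by simp)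
    omega
  obtain ⟨d, hdN, hd⟩ := hexists_d
  have hjm : j ∈ g m := (hg m j).2 (hSm i j)
  have hj : j ∈ g (N - 1) := by
    rcases le_or_gt m (N - 1) with h | h
    · exact hmono m (N - 1) h hjm
    · have h1 : g m = g d := by
        have := hstab d hd (m - d)
        rwa [Nat.add_sub_cancel' (by omega : d ≤ m)] at this
      have h2 : g (N - 1) = g d := by
        have := hstab d hd (N - 1 - d)
        rwa [Nat.add_sub_cancel' hdN] at this
      rw [h2, ← h1]; exact hjm
  have hfin : 0 < (S ^ (N - 1)) i j := (hg _ j).1 hj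
  obtain ⟨f, hf⟩ := aux_translate K hK0 (N - 1) i j hfin
  exact ⟨N - 1, by omega, le_rfl, f, hf⟩
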